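/- Let x ≥ 0, γ > 0, δ > 0 with γδ ≥ 1, and ι ∈ [0,1]. Then min{γδ + γx + γ²x², γ³x³} ≤ 3 (γδ)^{(1−ι)/3} (γx)^{2+ι}, and hence γ^{-1}δ^{-1} · min{γδ + γx + γ²x², γ³x³} ≤ 3 γ^{(4+2ι)/3} δ^{−(2+ι)/3} x^{2+ι}. -/
import Mathlib

lemma key_min_bound (a y ι : ℝ) (ha : 1 ≤ a) (hy : 0 ≤ y)
    (hι0 : 0 ≤ ι) (hι1 : ι ≤ 1) :
    min (a + y + y ^ 2) (y ^ 3) ≤ 3 * a ^ ((1 - ι) / 3) * y ^ (2 + ι) := by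
  have ha0 : (0:ℝ) < a := lt_of_lt_of_le one_pos ha
  have hA : (1:ℝ) ≤ a ^ ((1 - ι) / 3) :=
    Real.one_le_rpow ha (by linarith)
  have hcube : (1:ℝ) ≤ a ^ ((1:ℝ)/3) := Real.one_le_rpow ha (by norm_num)
  have hy2 : (0:ℝ) ≤ y ^ (2 + ι) := Real.rpow_nonneg hy _
  rcases le_total y (a ^ ((1:ℝ)/3)) with h | h
  · refine le_trans (min_le_right _ _) ?_
    have h3 : y ^ 3 = y ^ (2 + ι) * y ^ (1 - ι) := by
      rw [← Real.rpow_natCast y 3, ← Real.rpow_add' hy (by norm_num)]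
      norm_num
    rw [h3]
    have h1 : y ^ (1 - ι) ≤ (a ^ ((1:ℝ)/3)) ^ (1 - ι) :=
      Real.rpow_le_rpow hy h (by linarith)
    have h2 : (a ^ ((1:ℝ)/3)) ^ (1 - ι) = a ^ ((1 - ι) / 3) := by
      rw [← Real.rpow_mul (le_of_lt ha0)]; ring_nf
    rw [h2] at h1
    calc y ^ (2 + ι) * y ^ (1 - ι) ≤ y ^ (2 + ι) * a ^ ((1 - ι) / 3) :=
          mul_le_mul_of_nonneg_left h1 hy2
      _ ≤ 3 * a ^ ((1 - ι) / 3) * y ^ (2 + ι) := by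
          nlinarith [Real.rpow_nonneg (le_of_lt ha0) ((1 - ι)/3)]
  · refine le_trans (min_le_left _ _) ?_
    have hy1 : (1:ℝ) ≤ y := le_trans hcube h
    have hy0' : (0:ℝ) ≤ a ^ ((1 - ι)/3) := Real.rpow_nonneg (le_of_lt ha0) _
    -- a ≤ a^((1-ι)/3) * y^(2+ι)
    have ha' : a ≤ a ^ ((1 - ι)/3) * y ^ (2 + ι) := by
      have e1 : a = a ^ ((1 - ι)/3) * a ^ ((2 + ι)/3) := by
        rw [← Real.rpow_add ha0]
        rw [show (1 - ι)/3 + (2 + ι)/3 = 1 by ring, Real.rpow_one]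
      have e2 : a ^ ((2 + ι)/3) = (a ^ ((1:ℝ)/3)) ^ (2 + ι) := by
        rw [← Real.rpow_mul (le_of_lt ha0)]; ring_nf
      have e3 : (a ^ ((1:ℝ)/3)) ^ (2 + ι) ≤ y ^ (2 + ι) :=
        Real.rpow_le_rpow (by positivity) h (by linarith)
      rw [← e2] at e3
      calc a = a ^ ((1 - ι)/3) * a ^ ((2 + ι)/3) := e1
        _ ≤ a ^ ((1 - ι)/3) * y ^ (2 + ι) := mul_le_mul_of_nonneg_left e3 hy0'
    have hyle : y ≤ y ^ (2 + ι) := by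
      calc y = y ^ (1:ℝ) := (Real.rpow_one y).symm
        _ ≤ y ^ (2 + ι) := Real.rpow_le_rpow_of_exponent_le hy1 (by linarith)
    have hy2le : y ^ 2 ≤ y ^ (2 + ι) := by
      calc y ^ 2 = y ^ (2:ℝ) := by rw [Real.rpow_two]
        _ ≤ y ^ (2 + ι) := Real.rpow_le_rpow_of_exponent_le hy1 (by linarith)
    nlinarith [mul_le_mul_of_nonneg_left hyle hy0',
      mul_le_mul_of_nonneg_left hy2le hy0', ha', hy2, hy0',
      mul_le_mul_of_nonneg_right hA hy2]

theorem scaled_min_bound_rpow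
    (x γ δ ι : ℝ) (hx : 0 ≤ x) (hγ : 0 < γ) (hδ : 0 < δ) (hγδ : 1 ≤ γ * δ)
    (hι0 : 0 ≤ ι) (hι1 : ι ≤ 1) :
    min (γ * δ + γ * x + γ ^ 2 * x ^ 2) (γ ^ 3 * x ^ 3)
        ≤ 3 * (γ * δ) ^ ((1 - ι) / 3) * (γ * x) ^ (2 + ι) ∧
    γ⁻¹ * δ⁻¹ * min (γ * δ + γ * x + γ ^ 2 * x ^ 2) (γ ^ 3 * x ^ 3)
        ≤ 3 * γ ^ ((4 + 2 * ι) / 3) * δ ^ (-(2 + ι) / 3) * x ^ (2 + ι) := by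
  have hy : 0 ≤ γ * x := by positivity
  have key := key_min_bound (γ * δ) (γ * x) ι hγδ hy hι0 hι1
  have hrw : γ * δ + γ * x + (γ * x) ^ 2 = γ * δ + γ * x + γ ^ 2 * x ^ 2 := by ring
  have hrw3 : (γ * x) ^ 3 = γ ^ 3 * x ^ 3 := by ring
  rw [hrw, hrw3] at key
  refine ⟨key, ?_⟩
  have heq : γ⁻¹ * δ⁻¹ * (3 * (γ * δ) ^ ((1 - ι) / 3) * (γ * x) ^ (2 + ι))
      = 3 * γ ^ ((4 + 2 * ι) / 3) * δ ^ (-(2 + ι) / 3) * x ^ (2 + ι) := by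
    have g : γ⁻¹ * (γ ^ ((1 - ι)/3) * γ ^ (2 + ι)) = γ ^ ((4 + 2 * ι) / 3) := by
      rw [← Real.rpow_neg_one, ← Real.rpow_add hγ, ← Real.rpow_add hγ]
      congr 1; ring
    have d : δ⁻¹ * δ ^ ((1 - ι)/3) = δ ^ (-(2 + ι) / 3) := by
      rw [← Real.rpow_neg_one, ← Real.rpow_add hδ]
      congr 1; ring
    rw [Real.mul_rpow (le_of_lt hγ) (le_of_lt hδ),
        Real.mul_rpow (le_of_lt hγ) hx, ← g, ← d]
    ring
  calc γ⁻¹ * δ⁻¹ * min (γ * δ + γ * x + γ ^ 2 * x ^ 2) (γ ^ 3 * x ^ 3)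
      ≤ γ⁻¹ * δ⁻¹ * (3 * (γ * δ) ^ ((1 - ι) / 3) * (γ * x) ^ (2 + ι)) := by
        apply mul_le_mul_of_nonneg_left key (by positivity)
    _ = _ := heq
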